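/- Let C'/C be a field extension and V a representation of a group G over C whose scalar extension V ⊗_C C' is a semisimple C'-representation of G. Then V is semisimple as a C-representation of G. -/

import Mathlib

open scoped TensorProduct

/-- A submodule is a subrepresentation if it is stable under the group action. -/
def IsSubrep {C G V : Type*} [CommSemiring C] [Monoid G] [AddCommMonoid V] [Module C V]
    (ρ : Representation C G V) (W : Submodule C V) : Prop :=
  ∀ g : G, ∀ v ∈ W, ρ g v ∈ W

/-- A representation is semisimple if every subrepresentation admits a
`G`-stable complement. -/
def IsSemisimpleRep {C G V : Type*} [CommSemiring C] [Monoid G] [AddCommMonoid V] [Module C V]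
    (ρ : Representation C G V) : Prop :=
  ∀ W : Submodule C V, IsSubrep ρ W → ∃ W' : Submodule C V, IsSubrep ρ W' ∧ IsCompl W W'

/-- Descent of semisimplicity along a field extension `C'/C`: if the scalar
extension `V ⊗_C C'` (with `G` acting through the second factor, i.e.
`ρ' g (c ⊗ v) = c ⊗ ρ g v`) is a semisimple representation of `G` over `C'`,
then `V` is a semisimple representation of `G` over `C`. -/
theorem semisimple_of_scalar_extension_semisimple
    {C C' G V : Type*} [Field C] [Field C'] [Algebra C C'] [Group G]
    [AddCommGroup V] [Module C V]
    (ρ : Representation C G V)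
    (ρ' : Representation C' G (C' ⊗[C] V))
    (hρ' : ∀ (g : G) (c : C') (v : V), ρ' g (c ⊗ₜ[C] v) = c ⊗ₜ[C] (ρ g v))
    (hss : IsSemisimpleRep ρ') :
    IsSemisimpleRep ρ := by
  intro W hW
  -- φ : C' →ₗ[C] C with φ 1 = 1
  obtain ⟨φ, hφ⟩ := (Algebra.linearMap C C').exists_leftInverse_of_injective
    (by rw [LinearMap.ker_eq_bot]; exact (algebraMap C C').injective)
  have hφ1 : φ 1 = 1 := by simpa using LinearMap.congr_fun hφ 1
  -- ψ : C' ⊗ V →ₗ[C] V, c ⊗ v ↦ φ c • v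
  set ψ : C' ⊗[C] V →ₗ[C] V :=
    TensorProduct.lift ((LinearMap.lsmul C V).comp φ) with hψdef
  have hψ : ∀ (c : C') (v : V), ψ (c ⊗ₜ[C] v) = φ c • v := fun c v => rfl
  -- ψ is equivariant
  have hψequiv : ∀ (g : G) (x : C' ⊗[C] V), ψ (ρ' g x) = ρ g (ψ x) := by
    intro g x
    induction x using TensorProduct.induction_on with
    | zero => simp
    | tmul c v => rw [hρ', hψ, hψ, map_smul]
    | add a b ha hb => simp [map_add, ha, hb]
  -- W' := base change of W is ρ'-stable
  set W' : Submodule C' (C' ⊗[C] V) := W.baseChange C' with hW'def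
  have hW'stab : IsSubrep ρ' W' := by
    intro g x hx
    refine Submodule.span_induction (p := fun x _ => ρ' g x ∈ W') ?_ (by simp) ?_ ?_ (by rw [hW'def, Submodule.baseChange_eq_span] at hx; exact hx)
    · rintro y ⟨w, hw, rfl⟩
      simpa [hρ'] using Submodule.tmul_mem_baseChange_of_mem (1 : C') (hW g w hw)
    · intro a b _ _ ha hb; rw [map_add]; exact W'.add_mem ha hb
    · intro c x _ hx; rw [map_smul]; exact W'.smul_mem c hx
  -- ψ maps W' into W
  have hψW : ∀ x ∈ W', ψ x ∈ W := by
    intro x hx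
    have key : ∀ c' : C', ψ (c' • x) ∈ W := by
      refine Submodule.span_induction (p := fun x _ => ∀ c' : C', ψ (c' • x) ∈ W) ?_ (by simp) ?_ ?_ (by rw [hW'def, Submodule.baseChange_eq_span] at hx; exact hx)
      · rintro y ⟨w, hw, rfl⟩
        intro c'
        have : c' • ((1 : C') ⊗ₜ[C] w) = c' ⊗ₜ[C] w := by
          rw [TensorProduct.smul_tmul', smul_eq_mul, mul_one]
        rw [TensorProduct.mk_apply, this, hψ]
        exact W.smul_mem _ hw
      · intro a b _ _ ha hb c'
        rw [smul_add, map_add]; exact W.add_mem (ha c') (hb c')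
      · intro c x _ hx c'
        rw [smul_smul]; exact hx _
    simpa using key 1
  -- get the stable complement over C'
  obtain ⟨U, hUstab, hUcompl⟩ := hss W' hW'stab
  -- projection onto W' along U
  set P : (C' ⊗[C] V) →ₗ[C'] (C' ⊗[C] V) :=
    W'.subtype.comp (W'.projectionOnto U hUcompl) with hPdef
  have hPmem : ∀ x, P x ∈ W' := fun x => (W'.projectionOnto U hUcompl x).2
  have hPid : ∀ x ∈ W', P x = x := by
    intro x hx
    simp [hPdef, Submodule.projectionOnto_apply_left hUcompl ⟨x, hx⟩]
  have hPU : ∀ x ∈ U, P x = 0 := by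
    intro x hx
    simp [hPdef, Submodule.projectionOnto_apply_right hUcompl ⟨x, hx⟩]
  -- P is equivariant
  have hPequiv : ∀ (g : G) (x : C' ⊗[C] V), P (ρ' g x) = ρ' g (P x) := by
    intro g x
    have hdecomp : x = P x + (x - P x) := by abel
    have hxU : x - P x ∈ U := by
      have h0 : P (x - P x) = 0 := by rw [map_sub, hPid _ (hPmem x), sub_self]
      refine (Submodule.projectionOnto_apply_eq_zero_iff hUcompl).1 ?_
      have : ((W'.projectionOnto U hUcompl) (x - P x) : C' ⊗[C] V) = 0 := h0
      exact_mod_cast this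
    calc P (ρ' g x) = P (ρ' g (P x) + ρ' g (x - P x)) := by rw [← map_add, ← hdecomp]
    _ = P (ρ' g (P x)) + P (ρ' g (x - P x)) := map_add _ _ _
    _ = ρ' g (P x) + 0 := by
        rw [hPid _ (hW'stab g _ (hPmem x)), hPU _ (hUstab g _ hxU)]
    _ = ρ' g (P x) := add_zero _
  -- q : V →ₗ[C] V
  set q : V →ₗ[C] V :=
    ψ.comp ((P.restrictScalars C).comp (TensorProduct.mk C C' V 1)) with hqdef
  have hq : ∀ v, q v = ψ (P ((1:C') ⊗ₜ[C] v)) := fun v => rfl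
  have hqW : ∀ v, q v ∈ W := fun v => hψW _ (hPmem _)
  have hqid : ∀ w ∈ W, q w = w := by
    intro w hw
    rw [hq, hPid _ (Submodule.tmul_mem_baseChange_of_mem 1 hw), hψ, hφ1, one_smul]
  have hqequiv : ∀ (g : G) (v : V), q (ρ g v) = ρ g (q v) := by
    intro g v
    rw [hq, hq, ← hρ' g 1 v, hPequiv, hψequiv]
  refine ⟨LinearMap.ker q, ?_, ?_, ?_⟩
  · intro g v hv
    have : q ((ρ g) v) = 0 := by
      rw [hqequiv, LinearMap.mem_ker.mp hv, map_zero]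
    exact LinearMap.mem_ker.mpr this
  · rw [disjoint_iff, eq_bot_iff]
    rintro v ⟨hv1, hv2⟩
    have : q v = 0 := hv2
    have : v = 0 := by rw [← hqid v hv1, this]
    simp [this]
  · rw [codisjoint_iff, eq_top_iff]
    intro v _
    refine Submodule.mem_sup.mpr ⟨q v, hqW v, v - q v, ?_, by abel⟩
    have : q (v - q v) = 0 := by rw [map_sub, hqid _ (hqW v), sub_self]
    exact LinearMap.mem_ker.mpr this
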